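/- Let a : ℝ^d → [0,∞) be measurable with ∫ a(x) dx = 1 and finite moments m_l^a := ∫ |x|^l a(x) dx < ∞ for l = 1, …, d+1, and let ψ(x) = 1/(1+|x|^{d+1}). Suppose θ : ℝ^d → [0,∞) satisfies θ(x) ≤ c·ψ(x) for all x and some c > 0. Then the convolution satisfies (a * θ)(x) ≤ c·ψ(x)·(1 + Σ_{l=0}^{d+1} C(d+1,l) m_l^a) for every x ∈ ℝ^d. -/
import Mathlib


open MeasureTheory

noncomputable def psi (d : ℕ) (x : EuclideanSpace ℝ (Fin d)) : ℝ :=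
  1 / (1 + ‖x‖ ^ (d + 1))

lemma pow_le_one_add_pow {t : ℝ} (ht : 0 ≤ t) {k n : ℕ} (h : k ≤ n) : t ^ k ≤ 1 + t ^ n := by
  rcases le_total t 1 with h1 | h1
  · have hk : t ^ k ≤ 1 := pow_le_one₀ ht h1
    have := pow_nonneg ht n
    linarith
  · have hk : t ^ k ≤ t ^ n := pow_le_pow_right₀ h1 h
    linarith

/-- If `a ≥ 0`, `∫ a = 1`, the moments `m_l^a = ∫|x|^l a(x)dx` are finite for
`l ≤ d+1`, and `0 ≤ θ ≤ c·ψ`, then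
`(a*θ)(x) ≤ c·ψ(x)·(1 + Σ_{l=0}^{d+1} C(d+1,l) m_l^a)`. -/
theorem stmt4 (d : ℕ) (hd : 1 ≤ d) (a θ : EuclideanSpace ℝ (Fin d) → ℝ) (c : ℝ)
    (hc : 0 < c) (ha_meas : Measurable a) (ha_nonneg : ∀ x, 0 ≤ a x)
    (ha_norm : ∫ x, a x = 1)
    (hmom : ∀ l ≤ d + 1, Integrable (fun x => ‖x‖ ^ l * a x))
    (hθ_meas : Measurable θ) (hθ_nonneg : ∀ x, 0 ≤ θ x)
    (hθ : ∀ x, θ x ≤ c * psi d x) (x : EuclideanSpace ℝ (Fin d)) :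
    (∫ y, a (x - y) * θ y) ≤
      c * psi d x *
        (1 + ∑ l ∈ Finset.range (d + 2), ((d + 1).choose l : ℝ) * ∫ z, ‖z‖ ^ l * a z) := by
  set F : EuclideanSpace ℝ (Fin d) → ℝ :=
    fun z => a z * (1 + ∑ l ∈ Finset.range (d + 2), ((d + 1).choose l : ℝ) * ‖z‖ ^ l) with hF
  have ha_int : Integrable a := by simpa using hmom 0 (by omega)
  have hFeq : F = fun z =>
      a z + ∑ l ∈ Finset.range (d + 2), ((d + 1).choose l : ℝ) * (‖z‖ ^ l * a z) := by
    funext z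
    simp only [hF, mul_add, mul_one, Finset.mul_sum]
    congr 1
    exact Finset.sum_congr rfl fun l _ => by ring
  have hF_int : Integrable F := by
    rw [hFeq]
    exact ha_int.add (integrable_finset_sum _ fun l hl =>
      ((hmom l (by simpa using Nat.lt_succ_iff.mp (Finset.mem_range.mp hl))).const_mul _))
  have hF_integral : ∫ z, F z =
      1 + ∑ l ∈ Finset.range (d + 2), ((d + 1).choose l : ℝ) * ∫ z, ‖z‖ ^ l * a z := by
    rw [hFeq, integral_add ha_int (integrable_finset_sum _ fun l hl =>
      ((hmom l (by simpa using Nat.lt_succ_iff.mp (Finset.mem_range.mp hl))).const_mul _)),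
      ha_norm, integral_finset_sum _ fun l hl =>
      ((hmom l (by simpa using Nat.lt_succ_iff.mp (Finset.mem_range.mp hl))).const_mul _)]
    congr 1
    exact Finset.sum_congr rfl fun l _ => integral_const_mul _ _
  -- pointwise bound
  have hpsix : 0 < 1 + ‖x‖ ^ (d + 1) := by positivity
  have hbound : ∀ y, a (x - y) * θ y ≤ c * psi d x * F (x - y) := by
    intro y
    have hS : (0:ℝ) ≤ ∑ l ∈ Finset.range (d + 2), ((d + 1).choose l : ℝ) * ‖x - y‖ ^ l :=
      Finset.sum_nonneg fun l _ => by positivity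
    set S := ∑ l ∈ Finset.range (d + 2), ((d + 1).choose l : ℝ) * ‖x - y‖ ^ l with hSdef
    have hkey : 1 + ‖x‖ ^ (d + 1) ≤ (1 + ‖y‖ ^ (d + 1)) * (1 + S) := by
      have hx : ‖x‖ ≤ ‖x - y‖ + ‖y‖ := by
        calc ‖x‖ = ‖(x - y) + y‖ := by rw [sub_add_cancel]
        _ ≤ ‖x - y‖ + ‖y‖ := norm_add_le _ _
      have hx2 : ‖x‖ ^ (d + 1) ≤ (‖x - y‖ + ‖y‖) ^ (d + 1) :=
        pow_le_pow_left₀ (norm_nonneg _) hx _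
      have hexp : (‖x - y‖ + ‖y‖) ^ (d + 1) =
          ∑ l ∈ Finset.range (d + 2), ‖x - y‖ ^ l * ‖y‖ ^ (d + 1 - l) * ((d + 1).choose l : ℝ) :=
        add_pow _ _ _
      have hterm : ∀ l ∈ Finset.range (d + 2),
          ‖x - y‖ ^ l * ‖y‖ ^ (d + 1 - l) * ((d + 1).choose l : ℝ) ≤
          (1 + ‖y‖ ^ (d + 1)) * (((d + 1).choose l : ℝ) * ‖x - y‖ ^ l) := by
        intro l hl
        have hy : ‖y‖ ^ (d + 1 - l) ≤ 1 + ‖y‖ ^ (d + 1) :=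
          pow_le_one_add_pow (norm_nonneg _) (Nat.sub_le _ _)
        have h1 : (0:ℝ) ≤ ‖x - y‖ ^ l * ((d + 1).choose l : ℝ) := by positivity
        calc ‖x - y‖ ^ l * ‖y‖ ^ (d + 1 - l) * ((d + 1).choose l : ℝ)
            = ‖y‖ ^ (d + 1 - l) * (‖x - y‖ ^ l * ((d + 1).choose l : ℝ)) := by ring
          _ ≤ (1 + ‖y‖ ^ (d + 1)) * (‖x - y‖ ^ l * ((d + 1).choose l : ℝ)) :=
              mul_le_mul_of_nonneg_right hy h1
          _ = (1 + ‖y‖ ^ (d + 1)) * (((d + 1).choose l : ℝ) * ‖x - y‖ ^ l) := by ring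
      have hsum : ‖x‖ ^ (d + 1) ≤ (1 + ‖y‖ ^ (d + 1)) * S := by
        calc ‖x‖ ^ (d + 1) ≤ (‖x - y‖ + ‖y‖) ^ (d + 1) := hx2
          _ = ∑ l ∈ Finset.range (d + 2),
              ‖x - y‖ ^ l * ‖y‖ ^ (d + 1 - l) * ((d + 1).choose l : ℝ) := hexp
          _ ≤ ∑ l ∈ Finset.range (d + 2),
              (1 + ‖y‖ ^ (d + 1)) * (((d + 1).choose l : ℝ) * ‖x - y‖ ^ l) :=
              Finset.sum_le_sum hterm
          _ = (1 + ‖y‖ ^ (d + 1)) * S := by rw [hSdef, Finset.mul_sum]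
      have hy1 : (0:ℝ) ≤ ‖y‖ ^ (d + 1) := by positivity
      nlinarith
    have hpsiy : 0 < 1 + ‖y‖ ^ (d + 1) := by positivity
    have hψ : psi d y ≤ psi d x * (1 + S) := by
      unfold psi
      rw [div_mul_eq_mul_div, one_mul, div_le_div_iff₀ hpsiy hpsix]
      nlinarith
    have h1 : a (x - y) * θ y ≤ a (x - y) * (c * psi d y) :=
      mul_le_mul_of_nonneg_left (hθ y) (ha_nonneg _)
    have h2 : a (x - y) * (c * psi d y) ≤ a (x - y) * (c * (psi d x * (1 + S))) :=
      mul_le_mul_of_nonneg_left (by nlinarith) (ha_nonneg _)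
    calc a (x - y) * θ y ≤ a (x - y) * (c * (psi d x * (1 + S))) := le_trans h1 h2
      _ = c * psi d x * F (x - y) := by simp only [hF]; ring
  have hG_int : Integrable (fun y => c * psi d x * F (x - y)) :=
    (hF_int.comp_sub_left x).const_mul _
  have hG_val : (∫ y, c * psi d x * F (x - y)) =
      c * psi d x * (1 + ∑ l ∈ Finset.range (d + 2), ((d + 1).choose l : ℝ) *
        ∫ z, ‖z‖ ^ l * a z) := by
    rw [integral_const_mul, integral_sub_left_eq_self F volume x, hF_integral]
  calc (∫ y, a (x - y) * θ y) ≤ ∫ y, c * psi d x * F (x - y) :=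
      integral_mono_of_nonneg
        (Filter.Eventually.of_forall fun y => mul_nonneg (ha_nonneg _) (hθ_nonneg _))
        hG_int (Filter.Eventually.of_forall hbound)
    _ = _ := hG_val
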